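/- Under assumptions (i)–(iii), if additionally 1/C < p_L < 1 and 1/C < p_G < 1, then the accuracy of the agreement set strictly exceeds both individual accuracies: P(Y* = Y_L | Y_L = Y_G) > max(p_L, p_G). -/

import Mathlib

open MeasureTheory

/-- Under assumptions (i)–(iii), if additionally `1/C < p_L < 1` and `1/C < p_G < 1`,
then the accuracy of the agreement set strictly exceeds both individual accuracies:
`P(Y* = Y_L | Y_L = Y_G) > max p_L p_G`. -/
theorem agreement_set_accuracy_exceeds_individual
    {Ω : Type*} [MeasurableSpace Ω] (P : Measure Ω) [IsProbabilityMeasure P]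
    (C : ℕ) (hC : 2 ≤ C)
    (Ystar YL YG : Ω → Fin C)
    (hYstar : Measurable Ystar) (hYL : Measurable YL) (hYG : Measurable YG)
    (pL pG : ℝ)
    -- (i) class-independent accuracies
    (hiL : ∀ c : Fin C, P {ω | Ystar ω = c} ≠ 0 →
      (P {ω | YL ω = c ∧ Ystar ω = c}).toReal = pL * (P {ω | Ystar ω = c}).toReal)
    (hiG : ∀ c : Fin C, P {ω | Ystar ω = c} ≠ 0 →
      (P {ω | YG ω = c ∧ Ystar ω = c}).toReal = pG * (P {ω | Ystar ω = c}).toReal)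
    -- (ii) uniform error distribution
    (hiiL : ∀ c j : Fin C, j ≠ c → P {ω | Ystar ω = c} ≠ 0 →
      (P {ω | YL ω = j ∧ Ystar ω = c}).toReal
        = (1 - pL) / ((C : ℝ) - 1) * (P {ω | Ystar ω = c}).toReal)
    (hiiG : ∀ c j : Fin C, j ≠ c → P {ω | Ystar ω = c} ≠ 0 →
      (P {ω | YG ω = j ∧ Ystar ω = c}).toReal
        = (1 - pG) / ((C : ℝ) - 1) * (P {ω | Ystar ω = c}).toReal)
    -- (iii) conditional independence of `YL` and `YG` given `Ystar`
    (hiii : ∀ a b c : Fin C,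
      (P {ω | YL ω = a ∧ YG ω = b ∧ Ystar ω = c}).toReal * (P {ω | Ystar ω = c}).toReal
        = (P {ω | YL ω = a ∧ Ystar ω = c}).toReal
          * (P {ω | YG ω = b ∧ Ystar ω = c}).toReal)
    (hpL1 : 1 / (C : ℝ) < pL) (hpL2 : pL < 1)
    (hpG1 : 1 / (C : ℝ) < pG) (hpG2 : pG < 1) :
    (ProbabilityTheory.cond P {ω | YL ω = YG ω} {ω | Ystar ω = YL ω}).toReal
      > max pL pG := by
  classical
  have hCR : (2:ℝ) ≤ (C:ℝ) := by exact_mod_cast hC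
  have hCpos : (0:ℝ) < (C:ℝ) := by linarith
  have hC1 : (1:ℝ) ≤ (C:ℝ) - 1 := by linarith
  have hpL0 : 0 < pL := lt_trans (by positivity) hpL1
  have hpG0 : 0 < pG := lt_trans (by positivity) hpG1
  have hpLC : 1 < pL * C := by rw [div_lt_iff₀ hCpos] at hpL1; linarith
  have hpGC : 1 < pG * C := by rw [div_lt_iff₀ hCpos] at hpG1; linarith
  set eL : ℝ := (1 - pL) / ((C:ℝ) - 1) with heL
  set eG : ℝ := (1 - pG) / ((C:ℝ) - 1) with heG
  have heL0 : 0 ≤ eL := by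
    rw [heL]; apply div_nonneg <;> linarith
  have heG0 : 0 ≤ eG := by
    rw [heG]; apply div_nonneg <;> linarith
  have hmsS : ∀ c : Fin C, MeasurableSet {ω | Ystar ω = c} :=
    fun c => hYstar (measurableSet_singleton c)
  have hmsT : ∀ j c : Fin C, MeasurableSet {ω | YL ω = j ∧ YG ω = j ∧ Ystar ω = c} := by
    intro j c
    exact (hYL (measurableSet_singleton j)).inter
      ((hYG (measurableSet_singleton j)).inter (hYstar (measurableSet_singleton c)))
  -- key per-cell computation
  have key : ∀ j c : Fin C,
      (P {ω | YL ω = j ∧ YG ω = j ∧ Ystar ω = c}).toReal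
        = (if j = c then pL * pG else eL * eG) * (P {ω | Ystar ω = c}).toReal := by
    intro j c
    by_cases h : P {ω | Ystar ω = c} = 0
    · have hsub : {ω | YL ω = j ∧ YG ω = j ∧ Ystar ω = c} ⊆ {ω | Ystar ω = c} :=
        fun ω hω => hω.2.2
      have h0 : P {ω | YL ω = j ∧ YG ω = j ∧ Ystar ω = c} = 0 :=
        le_antisymm (h ▸ measure_mono hsub) zero_le
      simp [h0, h]
    · have hqne : (P {ω | Ystar ω = c}).toReal ≠ 0 :=
        ENNReal.toReal_ne_zero.mpr ⟨h, measure_ne_top P _⟩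
      have h3 := hiii j j c
      by_cases hjc : j = c
      · subst hjc
        rw [hiL j h, hiG j h] at h3
        have h4 : (P {ω | YL ω = j ∧ YG ω = j ∧ Ystar ω = j}).toReal
            * (P {ω | Ystar ω = j}).toReal
            = (pL * pG * (P {ω | Ystar ω = j}).toReal) * (P {ω | Ystar ω = j}).toReal := by
          rw [h3]; ring
        rw [if_pos rfl]
        exact mul_right_cancel₀ hqne h4
      · rw [hiiL c j hjc h, hiiG c j hjc h] at h3
        have h4 : (P {ω | YL ω = j ∧ YG ω = j ∧ Ystar ω = c}).toReal
            * (P {ω | Ystar ω = c}).toReal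
            = (eL * eG * (P {ω | Ystar ω = c}).toReal) * (P {ω | Ystar ω = c}).toReal := by
          rw [h3]; ring
        rw [if_neg hjc]
        exact mul_right_cancel₀ hqne h4
  -- sum of q = 1
  have hdisjS : Pairwise (Function.onFun Disjoint fun c : Fin C => {ω | Ystar ω = c}) := by
    intro a b hab
    simp only [Function.onFun, Set.disjoint_left, Set.mem_setOf_eq]
    intro ω h1 h2
    exact hab (h1 ▸ h2 ▸ rfl)
  have hsumq : ∑ c : Fin C, (P {ω | Ystar ω = c}).toReal = 1 := by
    have hU : (⋃ c : Fin C, {ω | Ystar ω = c}) = Set.univ := by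
      ext ω; simp
    have h1 : P (⋃ c : Fin C, {ω | Ystar ω = c}) = ∑' c, P {ω | Ystar ω = c} :=
      measure_iUnion hdisjS hmsS
    rw [hU, measure_univ, tsum_fintype] at h1
    have h2 := congrArg ENNReal.toReal h1
    rw [ENNReal.toReal_one, ENNReal.toReal_sum (fun a _ => measure_ne_top P _)] at h2
    exact h2.symm
  -- numerator
  have hNset : {ω | YL ω = YG ω} ∩ {ω | Ystar ω = YL ω}
      = ⋃ c : Fin C, {ω | YL ω = c ∧ YG ω = c ∧ Ystar ω = c} := by
    ext ω
    simp only [Set.mem_inter_iff, Set.mem_setOf_eq, Set.mem_iUnion]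
    constructor
    · rintro ⟨h1, h2⟩; exact ⟨YL ω, rfl, h1.symm, h2⟩
    · rintro ⟨c, h1, h2, h3⟩; exact ⟨h1.trans h2.symm, h3.trans h1.symm⟩
  have hNdisj : Pairwise (Function.onFun Disjoint
      fun c : Fin C => {ω | YL ω = c ∧ YG ω = c ∧ Ystar ω = c}) := by
    intro a b hab
    simp only [Function.onFun, Set.disjoint_left, Set.mem_setOf_eq]
    rintro ω ⟨h1, -, -⟩ ⟨h2, -, -⟩
    exact hab (h1 ▸ h2 ▸ rfl)
  have hnum : (P ({ω | YL ω = YG ω} ∩ {ω | Ystar ω = YL ω})).toReal = pL * pG := by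
    rw [hNset, measure_iUnion hNdisj (fun c => hmsT c c), tsum_fintype,
      ENNReal.toReal_sum (fun a _ => measure_ne_top P _)]
    have h5 : ∀ c : Fin C, (P {ω | YL ω = c ∧ YG ω = c ∧ Ystar ω = c}).toReal
        = pL * pG * (P {ω | Ystar ω = c}).toReal := by
      intro c
      have := key c c
      rwa [if_pos rfl] at this
    rw [Finset.sum_congr rfl (fun c _ => h5 c), ← Finset.mul_sum, hsumq, mul_one]
  -- denominator
  have hDset : {ω | YL ω = YG ω}
      = ⋃ p : Fin C × Fin C, {ω | YL ω = p.1 ∧ YG ω = p.1 ∧ Ystar ω = p.2} := by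
    ext ω
    simp only [Set.mem_setOf_eq, Set.mem_iUnion]
    constructor
    · intro h; exact ⟨(YL ω, Ystar ω), rfl, h.symm, rfl⟩
    · rintro ⟨p, h1, h2, -⟩; exact h1.trans h2.symm
  have hDdisj : Pairwise (Function.onFun Disjoint
      fun p : Fin C × Fin C => {ω | YL ω = p.1 ∧ YG ω = p.1 ∧ Ystar ω = p.2}) := by
    intro a b hab
    simp only [Function.onFun, Set.disjoint_left, Set.mem_setOf_eq]
    rintro ω ⟨h1, -, h3⟩ ⟨h2, -, h4⟩
    exact hab (Prod.ext (h1 ▸ h2 ▸ rfl) (h3 ▸ h4 ▸ rfl))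
  have hden : (P {ω | YL ω = YG ω}).toReal = pL * pG + ((C:ℝ) - 1) * (eL * eG) := by
    rw [hDset, measure_iUnion hDdisj (fun p => hmsT p.1 p.2), tsum_fintype,
      ENNReal.toReal_sum (fun a _ => measure_ne_top P _), Fintype.sum_prod_type]
    have hrow : ∀ j : Fin C, ∑ c : Fin C,
        (P {ω | YL ω = j ∧ YG ω = j ∧ Ystar ω = c}).toReal
        = ∑ c : Fin C, (if j = c then pL * pG else eL * eG)
            * (P {ω | Ystar ω = c}).toReal :=
      fun j => Finset.sum_congr rfl (fun c _ => key j c)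
    rw [Finset.sum_congr rfl (fun j _ => hrow j), Finset.sum_comm]
    have hcol : ∀ c : Fin C, ∑ j : Fin C, (if j = c then pL * pG else eL * eG)
          * (P {ω | Ystar ω = c}).toReal
        = (pL * pG + ((C:ℝ) - 1) * (eL * eG)) * (P {ω | Ystar ω = c}).toReal := by
      intro c
      rw [← Finset.sum_mul]
      congr 1
      have hsplit : (∑ i : Fin C, if i = c then pL * pG else eL * eG)
          = ∑ i : Fin C, ((eL * eG) + if i = c then pL * pG - eL * eG else 0) := by
        refine Finset.sum_congr rfl fun i _ => ?_
        by_cases h : i = c <;> simp [h]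
      rw [hsplit, Finset.sum_add_distrib, Finset.sum_const,
        Finset.sum_ite_eq' Finset.univ c (fun _ => pL * pG - eL * eG),
        if_pos (Finset.mem_univ c), Finset.card_univ, Fintype.card_fin,
        nsmul_eq_mul]
      ring
    rw [Finset.sum_congr rfl (fun c _ => hcol c), ← Finset.mul_sum, hsumq, mul_one]
  -- denominator is positive and < min pL pG
  have hdenpos : 0 < (P {ω | YL ω = YG ω}).toReal := by
    rw [hden]
    nlinarith [mul_pos hpL0 hpG0, mul_nonneg heL0 heG0]
  have hdenne : P {ω | YL ω = YG ω} ≠ 0 := by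
    intro h0
    rw [h0] at hdenpos
    simp at hdenpos
  have heLC : eL * ((C:ℝ) - 1) = 1 - pL := by
    rw [heL]; field_simp
  have heGC : eG * ((C:ℝ) - 1) = 1 - pG := by
    rw [heG]; field_simp
  have heGlt : eG < pG := by nlinarith [heGC]
  have heLlt : eL < pL := by nlinarith [heLC]
  have h6 : ((C:ℝ) - 1) * (eL * eG) = (1 - pL) * eG := by rw [← heLC]; ring
  have h7 : ((C:ℝ) - 1) * (eL * eG) = (1 - pG) * eL := by rw [← heGC]; ring
  have hdenG : (P {ω | YL ω = YG ω}).toReal < pG := by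
    rw [hden, h6]
    nlinarith [mul_lt_mul_of_pos_left heGlt (show (0:ℝ) < 1 - pL by linarith)]
  have hdenL : (P {ω | YL ω = YG ω}).toReal < pL := by
    rw [hden, h7]
    nlinarith [mul_lt_mul_of_pos_left heLlt (show (0:ℝ) < 1 - pG by linarith)]
  -- conditional probability
  have hmsA : MeasurableSet {ω | YL ω = YG ω} := by
    have : {ω | YL ω = YG ω} = ⋃ c : Fin C, {ω | YL ω = c} ∩ {ω | YG ω = c} := by
      ext ω
      simp only [Set.mem_setOf_eq, Set.mem_iUnion, Set.mem_inter_iff]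
      constructor
      · intro h; exact ⟨YL ω, rfl, h.symm⟩
      · rintro ⟨c, h1, h2⟩; exact h1.trans h2.symm
    rw [this]
    exact MeasurableSet.iUnion fun c =>
      (hYL (measurableSet_singleton c)).inter (hYG (measurableSet_singleton c))
  rw [ProbabilityTheory.cond_apply hmsA P, ENNReal.toReal_mul, ENNReal.toReal_inv, hnum]
  have hgoal : (P {ω | YL ω = YG ω}).toReal⁻¹ * (pL * pG) > max pL pG := by
    rw [gt_iff_lt, max_lt_iff]
    constructor
    · rw [← div_eq_inv_mul, lt_div_iff₀ hdenpos]
      exact mul_lt_mul_of_pos_left hdenG hpL0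
    · rw [← div_eq_inv_mul, lt_div_iff₀ hdenpos]
      calc pG * (P {ω | YL ω = YG ω}).toReal < pG * pL :=
            mul_lt_mul_of_pos_left hdenL hpG0
        _ = pL * pG := mul_comm _ _
  exact hgoal
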